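/- For r ≥ 1, the Waring rank over ℂ of F = x^r y^r (x + y) is r + 1. -/

import Mathlib

open MvPolynomial

noncomputable def lin (c : ℂ × ℂ) : MvPolynomial (Fin 2) ℂ :=
  C c.1 * X 0 + C c.2 * X 1

noncomputable def waringRank (d : ℕ) (F : MvPolynomial (Fin 2) ℂ) : ℕ :=
  sInf {r | ∃ (a : Fin r → ℂ) (c : Fin r → ℂ × ℂ), F = ∑ i, C (a i) * lin (c i) ^ d}

open Finset


lemma lin_pow (c1 c2 : ℂ) (n : ℕ) :
    (C c1 * X 0 + C c2 * X 1 : MvPolynomial (Fin 2) ℂ) ^ n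
    = ∑ m ∈ Finset.range (n+1), monomial (Finsupp.single 0 m + Finsupp.single 1 (n-m))
        (c1^m * c2^(n-m) * (n.choose m)) := by
  rw [add_pow]
  refine Finset.sum_congr rfl fun m hm => ?_
  simp only [mul_pow, ← C_pow, X_pow_eq_monomial]
  rw [show (C (c1 ^ m) * (monomial (Finsupp.single 0 m)) 1 *
      (C (c2 ^ (n - m)) * (monomial (Finsupp.single 1 (n-m))) 1) * ((n.choose m : ℕ) : MvPolynomial (Fin 2) ℂ))
      = (C (c1 ^ m) * C (c2 ^ (n - m)) * C ((n.choose m : ℂ))) *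
        ((monomial (Finsupp.single 0 m)) 1 * (monomial (Finsupp.single 1 (n-m))) 1) by
        rw [C_eq_coe_nat]; ring]
  rw [monomial_mul, ← C_mul, ← C_mul, C_mul_monomial]
  simp [mul_one]

lemma coeff_lin_pow (c1 c2 : ℂ) (n a b : ℕ) (hab : a + b = n) :
    coeff (Finsupp.single 0 a + Finsupp.single 1 b)
      ((C c1 * X 0 + C c2 * X 1 : MvPolynomial (Fin 2) ℂ)^n) = c1^a * c2^b * (n.choose a) := by
  rw [lin_pow, coeff_sum]
  rw [Finset.sum_eq_single a]
  · have hb : n - a = b := by omega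
    rw [hb, coeff_monomial, if_pos rfl]
  · intro m hm hma
    rw [coeff_monomial, if_neg]
    intro h
    apply hma
    have := DFunLike.congr_fun h 0
    simpa using this
  · intro h
    exact absurd (Finset.mem_range.mpr (by omega)) h

lemma F_eq (r : ℕ) : (X (0 : Fin 2) ^ r * X 1 ^ r * (X 0 + X 1) : MvPolynomial (Fin 2) ℂ)
    = monomial (Finsupp.single 0 (r+1) + Finsupp.single 1 r) 1
      + monomial (Finsupp.single 0 r + Finsupp.single 1 (r+1)) 1 := by
  rw [mul_add]
  congr 1 <;> simp [X_pow_eq_monomial] <;> rw [X, monomial_mul, mul_one] <;> congr 1 <;> abel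

open Complex in
lemma rou_filter (N : ℕ) (hN : 0 < N) (s : ℕ) :
    ∑ k ∈ Finset.range N, Complex.exp (2*Real.pi*I/N) ^ (k*s)
      = if N ∣ s then (N:ℂ) else 0 := by
  have hprim : IsPrimitiveRoot (Complex.exp (2*Real.pi*I/N)) N :=
    Complex.isPrimitiveRoot_exp N hN.ne'
  set ω := Complex.exp (2*Real.pi*I/N)
  simp only [mul_comm, pow_mul]
  by_cases h : N ∣ s
  · rw [if_pos h, (hprim.pow_eq_one_iff_dvd s).mpr h]
    simp
  · rw [if_neg h]
    have h1 : (ω ^ s) ≠ 1 := fun hc => h ((hprim.pow_eq_one_iff_dvd s).mp hc)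
    have h2 : (∑ k ∈ Finset.range N, (ω ^ s) ^ k) * (ω ^ s - 1) = (ω^s)^N - 1 :=
      geom_sum_mul _ _
    have h3 : (ω^s)^N = 1 := by
      rw [← pow_mul, mul_comm, pow_mul, hprim.pow_eq_one, one_pow]
    rw [h3, sub_self] at h2
    exact (mul_eq_zero.mp h2).resolve_right (sub_ne_zero_of_ne h1)

noncomputable def ww (r : ℕ) : ℂ := Complex.exp (2*Real.pi*Complex.I/((r+2 : ℕ) : ℂ))

noncomputable def kp (r : ℕ) : ℂ := (-1:ℂ)^r / (((r:ℂ)+2) * ((2*r+1).choose r))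

lemma dvd_helper (N a : ℕ) (h0 : 0 < a) (ha : a < 2*N) (h : N ∣ a) : a = N := by
  obtain ⟨t, rfl⟩ := h
  rcases t with _|_|t
  · simp at h0
  · simp
  · have h2 : N * 2 ≤ N * (t+1+1) := Nat.mul_le_mul_left N (by omega)
    omega

lemma sum_ww (r s : ℕ) :
    ∑ k ∈ Finset.range (r+1), ww r ^ ((k+1)*s)
      = (if (r+2) ∣ s then ((r+2 : ℕ) : ℂ) else 0) - 1 := by
  have h := rou_filter (r+2) (by omega) s
  rw [Finset.sum_range_succ'] at h
  simp only [zero_mul, pow_zero] at h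
  rw [ww]
  linear_combination h

lemma Tval (r m : ℕ) (hm : m ≤ 2*r+1) :
    ∑ k ∈ Finset.range (r+1),
      (kp r * (ww r^(2*(k+1)) - ww r^(k+1)))
        * ((1:ℂ)^m * (-(ww r^(k+1)))^(2*r+1-m) * ((2*r+1).choose m))
    = if m = r then 1 else if m = r+1 then 1 else 0 := by
  set p := 2*r+1 - m with hp
  have hsum : ∑ k ∈ Finset.range (r+1),
      (kp r * (ww r^(2*(k+1)) - ww r^(k+1)))
        * ((1:ℂ)^m * (-(ww r^(k+1)))^(2*r+1-m) * ((2*r+1).choose m))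
      = kp r * (-1:ℂ)^p * ((2*r+1).choose m)
        * ((∑ k ∈ Finset.range (r+1), ww r ^ ((k+1)*(p+2)))
           - (∑ k ∈ Finset.range (r+1), ww r ^ ((k+1)*(p+1)))) := by
    rw [← Finset.sum_sub_distrib, Finset.mul_sum]
    refine Finset.sum_congr rfl fun k hk => ?_
    rw [neg_pow, one_pow, ← hp]
    have e1 : ww r ^ ((k+1)*(p+2)) = ww r^(2*(k+1)) * (ww r^(k+1))^p := by
      rw [← pow_mul, ← pow_add]; ring_nf
    have e2 : ww r ^ ((k+1)*(p+1)) = ww r^(k+1) * (ww r^(k+1))^p := by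
      rw [← pow_mul, ← pow_add]; ring_nf
    rw [e1, e2]
    ring
  rw [hsum, sum_ww, sum_ww]
  have hch : ((2*r+1).choose r : ℂ) ≠ 0 := by
    have : 0 < (2*r+1).choose r := Nat.choose_pos (by omega)
    exact_mod_cast this.ne'
  have hr2 : ((r:ℂ)+2) ≠ 0 := by
    have : ((r+2:ℕ):ℂ) ≠ 0 := Nat.cast_ne_zero.mpr (by omega)
    push_cast at this
    exact this
  by_cases h1 : m = r
  · subst h1
    have hpv : p = m+1 := by omega
    have d1 : (m+2) ∣ (p+2) ↔ False := by
      constructor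
      · intro h; have := dvd_helper (m+2) (p+2) (by omega) (by omega) h; omega
      · exact False.elim
    have d2 : (m+2) ∣ (p+1) := by rw [hpv]
    rw [if_pos d2, if_neg (by simp [d1])]
    rw [if_pos rfl]
    rw [kp, hpv]
    push_cast
    field_simp
    rw [show ((-1:ℂ))^m * (-1)^(m+1) = -1 by
      rw [← pow_add]; exact Odd.neg_one_pow ⟨m, by ring⟩]
    ring
  · by_cases h2 : m = r+1
    · subst h2
      have hpv : p = r := by omega
      have d1 : (r+2) ∣ (p+2) := by rw [hpv]
      have d2 : (r+2) ∣ (p+1) ↔ False := by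
        constructor
        · intro h; have := dvd_helper (r+2) (p+1) (by omega) (by omega) h; omega
        · exact False.elim
      rw [if_pos d1, if_neg (by simp [d2]), if_neg (by omega), if_pos rfl]
      rw [kp, hpv]
      have hcc : ((2*r+1).choose (r+1)) = ((2*r+1).choose r) := by
        have h := Nat.choose_symm (show r+1 ≤ 2*r+1 by omega)
        rw [show 2*r+1-(r+1) = r by omega] at h
        exact h.symm
      rw [hcc]
      push_cast
      field_simp
      rw [show ((-1:ℂ)^r)^2 = 1 by
        rw [← pow_mul]; exact Even.neg_one_pow ⟨r, by ring⟩]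
      ring
    · have hpr : p ≠ r ∧ p ≠ r+1 := by omega
      have d1 : ¬ (r+2) ∣ (p+2) := by
        intro h; have := dvd_helper (r+2) (p+2) (by omega) (by omega) h; omega
      have d2 : ¬ (r+2) ∣ (p+1) := by
        intro h; have := dvd_helper (r+2) (p+1) (by omega) (by omega) h; omega
      rw [if_neg d1, if_neg d2, if_neg h1, if_neg h2]
      ring


lemma upper (r : ℕ) :
    (X (0:Fin 2)^r * X 1^r * (X 0 + X 1) : MvPolynomial (Fin 2) ℂ)
    = ∑ i : Fin (r+1), C (kp r * (ww r^(2*((i:ℕ)+1)) - ww r^((i:ℕ)+1)))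
        * lin (1, -(ww r^((i:ℕ)+1))) ^ (2*r+1) := by
  have step1 : ∑ i : Fin (r+1), C (kp r * (ww r^(2*((i:ℕ)+1)) - ww r^((i:ℕ)+1)))
        * lin (1, -(ww r^((i:ℕ)+1))) ^ (2*r+1)
      = ∑ m ∈ Finset.range (2*r+1+1), monomial (Finsupp.single (0:Fin 2) m + Finsupp.single (1:Fin 2) (2*r+1-m))
          (∑ k ∈ Finset.range (r+1), (kp r * (ww r^(2*(k+1)) - ww r^(k+1)))
            * ((1:ℂ)^m * (-(ww r^(k+1)))^(2*r+1-m) * ((2*r+1).choose m))) := by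
    have e1 : ∀ i : Fin (r+1), C (kp r * (ww r^(2*((i:ℕ)+1)) - ww r^((i:ℕ)+1)))
        * lin (1, -(ww r^((i:ℕ)+1))) ^ (2*r+1)
        = ∑ m ∈ Finset.range (2*r+1+1),
            monomial (Finsupp.single (0:Fin 2) m + Finsupp.single (1:Fin 2) (2*r+1-m))
              ((kp r * (ww r^(2*((i:ℕ)+1)) - ww r^((i:ℕ)+1)))
                * ((1:ℂ)^m * (-(ww r^((i:ℕ)+1)))^(2*r+1-m) * ((2*r+1).choose m))) := by
      intro i
      rw [lin, lin_pow, Finset.mul_sum]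
      exact Finset.sum_congr rfl fun m _ => C_mul_monomial
    rw [Finset.sum_congr rfl fun i _ => e1 i, Finset.sum_comm]
    refine Finset.sum_congr rfl fun m _ => ?_
    rw [← map_sum, Fin.sum_univ_eq_sum_range
      (fun k => (kp r * (ww r^(2*(k+1)) - ww r^(k+1)))
        * ((1:ℂ)^m * (-(ww r^(k+1)))^(2*r+1-m) * ((2*r+1).choose m)))]
  have step2 : ∀ m ∈ Finset.range (2*r+1+1),
      monomial (Finsupp.single (0:Fin 2) m + Finsupp.single (1:Fin 2) (2*r+1-m))
          (∑ k ∈ Finset.range (r+1), (kp r * (ww r^(2*(k+1)) - ww r^(k+1)))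
            * ((1:ℂ)^m * (-(ww r^(k+1)))^(2*r+1-m) * ((2*r+1).choose m)))
      = monomial (Finsupp.single (0:Fin 2) m + Finsupp.single (1:Fin 2) (2*r+1-m))
          (if m = r then 1 else if m = r+1 then (1:ℂ) else 0) := by
    intro m hm
    rw [Tval r m (by simp at hm; omega)]
  symm
  calc ∑ i : Fin (r+1), C (kp r * (ww r^(2*((i:ℕ)+1)) - ww r^((i:ℕ)+1)))
        * lin (1, -(ww r^((i:ℕ)+1))) ^ (2*r+1)
      = ∑ m ∈ Finset.range (2*r+1+1), monomial (Finsupp.single (0:Fin 2) m + Finsupp.single (1:Fin 2) (2*r+1-m))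
          (∑ k ∈ Finset.range (r+1), (kp r * (ww r^(2*(k+1)) - ww r^(k+1)))
            * ((1:ℂ)^m * (-(ww r^(k+1)))^(2*r+1-m) * ((2*r+1).choose m))) := step1
    _ = ∑ m ∈ Finset.range (2*r+1+1), monomial (Finsupp.single (0:Fin 2) m + Finsupp.single (1:Fin 2) (2*r+1-m))
          (if m = r then 1 else if m = r+1 then (1:ℂ) else 0) := Finset.sum_congr rfl step2
    _ = ∑ m ∈ ({r, r+1} : Finset ℕ), monomial (Finsupp.single (0:Fin 2) m + Finsupp.single (1:Fin 2) (2*r+1-m))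
          (if m = r then 1 else if m = r+1 then (1:ℂ) else 0) :=
        (Finset.sum_subset (by intro x hx; simp at hx; simp; omega)
          (fun x hx hxn => by
            simp only [Finset.mem_insert, Finset.mem_singleton, not_or] at hxn
            rw [if_neg hxn.1, if_neg hxn.2, map_zero])).symm
    _ = X 0 ^ r * X 1 ^ r * (X 0 + X 1) := by
        rw [Finset.sum_pair (show r ≠ r+1 by omega)]
        rw [if_pos rfl, if_neg (by omega), if_pos rfl]
        rw [F_eq, show 2*r+1-r = r+1 by omega, show 2*r+1-(r+1) = r by omega]
        exact add_comm _ _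

lemma lower (r n : ℕ) (hn : n ≤ r) (a : Fin n → ℂ) (c : Fin n → ℂ × ℂ)
    (hF : (X (0:Fin 2)^r * X 1^r * (X 0 + X 1) : MvPolynomial (Fin 2) ℂ)
      = ∑ i, C (a i) * lin (c i) ^ (2*r+1)) : False := by
  classical
  have hch : ∀ m : ℕ, m ≤ 2*r+1 → (((2*r+1).choose m : ℂ)) ≠ 0 := by
    intro m hm
    have : 0 < (2*r+1).choose m := Nat.choose_pos hm
    exact_mod_cast this.ne'
  set Row : Fin (r+1) → Fin (r+2) → ℂ := fun i j =>
    coeff (Finsupp.single (0:Fin 2) ((i:ℕ)+(j:ℕ)) + Finsupp.single 1 (2*r+1 - ((i:ℕ)+(j:ℕ))))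
      (X (0:Fin 2)^r * X 1^r * (X 0 + X 1))
      / ((2*r+1).choose ((i:ℕ)+(j:ℕ))) with hRowDef
  set v : Fin n → Fin (r+2) → ℂ :=
    fun k => fun j : Fin (r+2) => (c k).1^(j:ℕ) * (c k).2^(r+1-(j:ℕ)) with hvDef
  have hij : ∀ (i : Fin (r+1)) (j : Fin (r+2)), (i:ℕ)+(j:ℕ) ≤ 2*r+1 := by
    intro i j; have := i.2; have := j.2; omega
  have RowA : ∀ i j, Row i j
      = ∑ k : Fin n, (a k * (c k).1^(i:ℕ) * (c k).2^(r-(i:ℕ))) * v k j := by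
    intro i j
    rw [hRowDef]
    simp only
    rw [hF, coeff_sum, Finset.sum_div]
    refine Finset.sum_congr rfl fun k _ => ?_
    rw [coeff_C_mul, lin, coeff_lin_pow _ _ _ _ _ (by have := hij i j; omega), hvDef]
    simp only
    rw [mul_div_assoc, mul_div_assoc, div_self (hch _ (hij i j)), mul_one]
    rw [pow_add, show 2*r+1 - ((i:ℕ)+(j:ℕ)) = (r-(i:ℕ)) + (r+1-(j:ℕ)) by
      have := i.2; have := j.2; omega, pow_add]
    ring
  have RowB : ∀ i j, Row i j
      = ((if ((i:ℕ)+(j:ℕ)) = r+1 then (1:ℂ) else 0) + (if ((i:ℕ)+(j:ℕ)) = r then (1:ℂ) else 0))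
        / ((2*r+1).choose ((i:ℕ)+(j:ℕ))) := by
    intro i j
    rw [hRowDef]
    simp only
    rw [F_eq, coeff_add, coeff_monomial, coeff_monomial]
    congr 1
    congr 1
    · by_cases h : ((i:ℕ)+(j:ℕ)) = r+1
      · rw [if_pos _, if_pos h]
        rw [h, show 2*r+1 - (r+1) = r by omega]
      · rw [if_neg _, if_neg h]
        intro hc
        exact h (by have := DFunLike.congr_fun hc (0 : Fin 2); simpa using this.symm)
    · by_cases h : ((i:ℕ)+(j:ℕ)) = r
      · rw [if_pos _, if_pos h]
        rw [h, show 2*r+1 - r = r+1 by omega]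
      · rw [if_neg _, if_neg h]
        intro hc
        exact h (by have := DFunLike.congr_fun hc (0 : Fin 2); simpa using this.symm)
  have hLI : LinearIndependent ℂ Row := by
    rw [Fintype.linearIndependent_iff]
    intro g hg
    have hgj : ∀ j : Fin (r+2), ∑ i : Fin (r+1), g i * Row i j = 0 := by
      intro j
      have h := congrFun hg j
      simpa [Finset.sum_apply] using h
    have key : ∀ t : ℕ, ∀ ht : t ≤ r, g ⟨t, by omega⟩ = 0 := by
      intro t
      induction t with
      | zero =>
        intro ht
        have h0 := hgj ⟨r+1, by omega⟩
        rw [Finset.sum_eq_single (⟨0, by omega⟩ : Fin (r+1))] at h0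
        · have hval : Row ⟨0, by omega⟩ ⟨r+1, by omega⟩
              = 1 / ((2*r+1).choose (r+1)) := by
            rw [RowB]
            simp only [Fin.val_mk]
            rw [if_pos (by omega), if_neg (by omega)]
            norm_num
          rw [hval] at h0
          have := hch (r+1) (by omega)
          field_simp at h0
          simpa using h0
        · intro b _ hb
          have hb' : (b:ℕ) ≠ 0 := fun hc => hb (by ext; simpa using hc)
          have hb2 := b.2
          rw [RowB]
          simp only [Fin.val_mk]
          rw [if_neg (by omega), if_neg (by omega)]
          norm_num
        · intro h; exact absurd (Finset.mem_univ _) h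
      | succ t ih =>
        intro ht
        have h0 := hgj ⟨r-t, by omega⟩
        rw [Finset.sum_eq_single (⟨t+1, by omega⟩ : Fin (r+1))] at h0
        · have hval : Row ⟨t+1, by omega⟩ ⟨r-t, by omega⟩
              = 1 / ((2*r+1).choose (r+1)) := by
            rw [RowB]
            simp only [Fin.val_mk]
            rw [if_pos (by omega), if_neg (by omega)]
            norm_num
            congr 1
            omega
          rw [hval] at h0
          have := hch (r+1) (by omega)
          field_simp at h0
          simpa using h0
        · intro b _ hb
          by_cases hbt : (b:ℕ) = t
          · have : g b = 0 := by
              have := ih (by omega)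
              convert this using 2
              ext; simpa using hbt
            rw [this, zero_mul]
          · have hb' : (b:ℕ) ≠ t+1 := fun hc => hb (by ext; simpa using hc)
            have hb2 := b.2
            rw [RowB]
            simp only [Fin.val_mk]
            rw [if_neg (by omega), if_neg (by omega)]
            norm_num
        · intro h; exact absurd (Finset.mem_univ _) h
    intro i
    have h := key (i:ℕ) (by have := i.2; omega)
    have he : (⟨(i:ℕ), by have := i.2; omega⟩ : Fin (r+1)) = i := by ext; simp
    rwa [he] at h
  have hmem : ∀ i, Row i ∈ Submodule.span ℂ (Set.range v) := by
    intro i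
    have hrw : Row i = ∑ k : Fin n, (a k * (c k).1^(i:ℕ) * (c k).2^(r-(i:ℕ))) • v k := by
      funext j
      rw [RowA i j]
      rw [Finset.sum_apply]
      rfl
    rw [hrw]
    exact Submodule.sum_mem _ fun k _ =>
      Submodule.smul_mem _ _ (Submodule.subset_span ⟨k, rfl⟩)
  have h1 : Submodule.span ℂ (Set.range Row) ≤ Submodule.span ℂ (Set.range v) :=
    Submodule.span_le.mpr (by rintro x ⟨i, rfl⟩; exact hmem i)
  have h2 : Module.finrank ℂ (Submodule.span ℂ (Set.range Row)) = r + 1 := by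
    rw [finrank_span_eq_card hLI, Fintype.card_fin]
  have h3 : Module.finrank ℂ (Submodule.span ℂ (Set.range v)) ≤ n := by
    have := finrank_range_le_card (R := ℂ) v
    rw [Fintype.card_fin] at this
    exact this
  have h4 := Submodule.finrank_mono h1
  omega


theorem waring_rank_xryr_x_plus_y (r : ℕ) (hr : 1 ≤ r) :
    waringRank (2 * r + 1) (X (0 : Fin 2) ^ r * X 1 ^ r * (X 0 + X 1)) = r + 1 := by
  rw [waringRank]
  apply le_antisymm
  · exact Nat.sInf_le ⟨fun i => kp r * (ww r^(2*((i:ℕ)+1)) - ww r^((i:ℕ)+1)),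
      fun i => (1, -(ww r^((i:ℕ)+1))), upper r⟩
  · apply le_csInf
    · exact ⟨r+1, fun i => kp r * (ww r^(2*((i:ℕ)+1)) - ww r^((i:ℕ)+1)),
        fun i => (1, -(ww r^((i:ℕ)+1))), upper r⟩
    · rintro b ⟨a, c, hb⟩
      by_contra hlt
      push_neg at hlt
      exact lower r b (by omega) a c hb
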